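/- With the notation of the eigenspace decomposition theorem: for each i, the projection from the null space of P = (E - λ₁)···(E - λ_p) onto the null space of E - λᵢ (along the other summands) is given by the operator Projᵢ = yᵢ · ∏_{j≠i} (E - λⱼ), where yᵢ = ∏_{j≠i} (λᵢ - λⱼ)⁻¹; that is, Projᵢ restricted to the null space of P is the identity on ker(E - λᵢ) and zero on ker(E - λⱼ) for j ≠ i. -/

import Mathlib

open Polynomial

lemma aeval_apply_of_smul_eq {F V : Type*} [Field F] [AddCommGroup V] [Module F V]
    (E : Module.End F V) (μ : F) (v : V) (h : E v = μ • v) (q : F[X]) :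
    Polynomial.aeval E q v = q.eval μ • v := by
  induction q using Polynomial.induction_on with
  | C a => simp [Module.algebraMap_end_apply]
  | add p q hp hq => simp [hp, hq, add_smul, LinearMap.add_apply]
  | monomial n a ih =>
      have hsplit : (C a * X ^ (n + 1)) = (C a * X ^ n) * X := by ring
      rw [hsplit, map_mul, Module.End.mul_apply, Polynomial.aeval_X, h, map_smul, ih,
        smul_smul]
      congr 1
      simp [pow_succ]
      ring

/-- **Theorem (projection formula).**
With `V` a vector space over a field `F`, `E : V → V` linear and `λ₁,…,λ_p` mutually distinct,
the projection from `ker((E-λ₁)⋯(E-λ_p))` onto `ker(E - λᵢ)` along the other summands is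
`Projᵢ = yᵢ • ∏_{j≠i}(E - λⱼ)` with `yᵢ = ∏_{j≠i}(λᵢ - λⱼ)⁻¹`:  restricted to the null space
of `P`, `Projᵢ` is the identity on `ker(E - λᵢ)` and zero on `ker(E - λⱼ)` for `j ≠ i`. -/
theorem projection_formula_for_distinct_factor_product
    {F V : Type*} [Field F] [AddCommGroup V] [Module F V]
    (E : Module.End F V) {p : ℕ} (lam : Fin p → F) (hlam : Function.Injective lam)
    (i : Fin p)
    (Proj : Module.End F V)
    (hProj : Proj = (∏ j ∈ Finset.univ.erase i, (lam i - lam j)⁻¹) •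
        Polynomial.aeval E (∏ j ∈ Finset.univ.erase i, (X - C (lam j)))) :
    (∀ v : V, v ∈ LinearMap.ker (E - lam i • 1) → Proj v = v) ∧
    (∀ j : Fin p, j ≠ i → ∀ v : V, v ∈ LinearMap.ker (E - lam j • 1) → Proj v = 0) := by
  have key : ∀ (μ : F) (v : V), v ∈ LinearMap.ker (E - μ • 1) →
      Proj v = ((∏ j ∈ Finset.univ.erase i, (lam i - lam j)⁻¹) *
        ∏ j ∈ Finset.univ.erase i, (μ - lam j)) • v := by
    intro μ v hv
    have hEv : E v = μ • v := by
      have h2 : E v - μ • v = 0 := by simpa using LinearMap.mem_ker.mp hv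
      exact sub_eq_zero.mp h2
    rw [hProj, LinearMap.smul_apply,
      aeval_apply_of_smul_eq E μ v hEv, smul_smul]
    congr 1
    simp [Polynomial.eval_prod]
  constructor
  · intro v hv
    rw [key (lam i) v hv, ← Finset.prod_mul_distrib,
      Finset.prod_eq_one, one_smul]
    intro j hj
    exact inv_mul_cancel₀ (sub_ne_zero.mpr fun h => (Finset.mem_erase.mp hj).1 (hlam h).symm)
  · intro j hj v hv
    rw [key (lam j) v hv]
    have : (∏ k ∈ Finset.univ.erase i, (lam j - lam k)) = 0 :=
      Finset.prod_eq_zero (Finset.mem_erase.mpr ⟨hj, Finset.mem_univ j⟩) (by simp)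
    rw [this, mul_zero, zero_smul]
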